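/- For every q-ary DMC W (q = 2^r), the maximal Bhattacharyya parameter over the top ordered-weight class satisfies Z_max^{(r)}(W⁻) ≤ q · Z_max^{(r)}(W). -/

import Mathlib

open Finset

instance (r : ℕ) : NeZero (2 ^ r) := ⟨pow_ne_zero r two_ne_zero⟩

/-- The Bhattacharyya parameter `Z(W; x, x') = ∑_y √(W x y · W x' y)` of a pair of inputs. -/
noncomputable def bhat {q : ℕ} {Y : Type*} [Fintype Y] (W : ZMod q → Y → ℝ) (x x' : ZMod q) : ℝ :=
  ∑ y, Real.sqrt (W x y * W x' y)

/-- `Z_v(W) = (1/q) ∑_x Z(W; x, x+v)`. -/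
noncomputable def Zv {q : ℕ} [NeZero q] {Y : Type*} [Fintype Y] (W : ZMod q → Y → ℝ) (v : ZMod q) : ℝ :=
  (1 / (q : ℝ)) * ∑ x, bhat W x (x + v)

/-- `W` is a discrete memoryless channel: nonnegative entries and rows summing to one. -/
def IsDMC {q : ℕ} {Y : Type*} [Fintype Y] (W : ZMod q → Y → ℝ) : Prop :=
  (∀ x y, 0 ≤ W x y) ∧ ∀ x, ∑ y, W x y = 1

/-- The ordered weight `wt(v) = r - ν₂(v̄)` of `v : ZMod (2^r)`. -/
def owt (r : ℕ) {q : ℕ} (v : ZMod q) : ℕ := r - padicValNat 2 v.val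

/-- The `i`-th average Bhattacharyya distance `Z_i(W) = 2^{-(i-1)} ∑_{v ∈ X_i} Z_v(W)`. -/
noncomputable def Zi (r : ℕ) {Y : Type*} [Fintype Y] (W : ZMod (2 ^ r) → Y → ℝ) (i : ℕ) : ℝ :=
  (1 / 2 ^ (i - 1) : ℝ) *
    ∑ v ∈ univ.filter (fun v : ZMod (2 ^ r) => v ≠ 0 ∧ owt r v = i), Zv W v

/-- The symmetric capacity `I(W)` (with `0 log 0 = 0`). -/
noncomputable def symCap {q : ℕ} [NeZero q] {Y : Type*} [Fintype Y] (W : ZMod q → Y → ℝ) : ℝ :=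
  ∑ x, ∑ y, (1 / (q : ℝ)) * W x y *
    Real.logb 2 (W x y / ∑ x', (1 / (q : ℝ)) * W x' y)

/-- `Z_max^{(j)}(W) = max_{v ∈ X_j} Z_v(W)` (as a supremum over the finite nonempty class `X_j`). -/
noncomputable def Zmax (r : ℕ) {Y : Type*} [Fintype Y] (W : ZMod (2 ^ r) → Y → ℝ) (j : ℕ) : ℝ :=
  ⨆ v : {v : ZMod (2 ^ r) // v ≠ 0 ∧ owt r v = j}, Zv W v.1

/-- The Arıkan minus transform `W⁻ u₁ (y₁,y₂) = (1/q) ∑_{u₂} W (u₁+u₂) y₁ · W u₂ y₂`. -/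
noncomputable def Wminus {q : ℕ} [NeZero q] {Y : Type*} [Fintype Y] (W : ZMod q → Y → ℝ) :
    ZMod q → Y × Y → ℝ :=
  fun u₁ p => (1 / (q : ℝ)) * ∑ u₂, W (u₁ + u₂) p.1 * W u₂ p.2

/-- The Arıkan plus transform `W⁺ u₂ (y₁,y₂,u₁) = (1/q) W (u₁+u₂) y₁ · W u₂ y₂`. -/
noncomputable def Wplus {q : ℕ} [NeZero q] {Y : Type*} [Fintype Y] (W : ZMod q → Y → ℝ) :
    ZMod q → Y × Y × ZMod q → ℝ :=
  fun u₂ p => (1 / (q : ℝ)) * W (p.2.2 + u₂) p.1 * W u₂ p.2.1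

/-- The restricted channel `W^{[r-k]}` for the `r-k` least significant bits. -/
noncomputable def Wres (r k : ℕ) {Y : Type*} [Fintype Y] (W : ZMod (2 ^ r) → Y → ℝ) :
    ZMod (2 ^ (r - k)) → Y → ℝ :=
  fun u y => (1 / 2 ^ k : ℝ) *
    ∑ x ∈ univ.filter (fun x : ZMod (2 ^ r) => x.val % 2 ^ (r - k) = u.val), W x y

section helpers
variable {q : ℕ} {Y : Type*} [Fintype Y]

lemma sqrt_add_le' {x y : ℝ} (hx : 0 ≤ x) (hy : 0 ≤ y) :
    Real.sqrt (x + y) ≤ Real.sqrt x + Real.sqrt y := by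
  have h : x + y ≤ (Real.sqrt x + Real.sqrt y) ^ 2 := by
    have hx2 := Real.sq_sqrt hx
    have hy2 := Real.sq_sqrt hy
    nlinarith [Real.sqrt_nonneg x, Real.sqrt_nonneg y]
  calc Real.sqrt (x + y) ≤ Real.sqrt ((Real.sqrt x + Real.sqrt y) ^ 2) := Real.sqrt_le_sqrt h
    _ = Real.sqrt x + Real.sqrt y := Real.sqrt_sq (by positivity)

lemma sqrt_sum_le {ι : Type*} (s : Finset ι) (f : ι → ℝ) (hf : ∀ i ∈ s, 0 ≤ f i) :
    Real.sqrt (∑ i ∈ s, f i) ≤ ∑ i ∈ s, Real.sqrt (f i) := by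
  induction s using Finset.cons_induction with
  | empty => simp
  | cons a s ha ih =>
    rw [Finset.sum_cons, Finset.sum_cons]
    calc Real.sqrt (f a + ∑ i ∈ s, f i) ≤ Real.sqrt (f a) + Real.sqrt (∑ i ∈ s, f i) :=
          sqrt_add_le' (hf a (Finset.mem_cons_self a s))
            (Finset.sum_nonneg fun i hi => hf i (Finset.mem_cons_of_mem hi))
      _ ≤ _ := by gcongr; exact ih fun i hi => hf i (Finset.mem_cons_of_mem hi)

lemma bhat_nonneg (W : ZMod q → Y → ℝ) (x x' : ZMod q) : 0 ≤ bhat W x x' :=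
  Finset.sum_nonneg fun _ _ => Real.sqrt_nonneg _

lemma bhat_le_one (W : ZMod q → Y → ℝ) (hW : IsDMC W) (x x' : ZMod q) : bhat W x x' ≤ 1 := by
  have : bhat W x x' ≤ ∑ y, (W x y + W x' y) / 2 := by
    apply Finset.sum_le_sum
    intro y _
    have h1 := hW.1 x y
    have h2 := hW.1 x' y
    rw [Real.sqrt_mul h1]
    have s1 := Real.sq_sqrt h1
    have s2 := Real.sq_sqrt h2
    nlinarith [sq_nonneg (Real.sqrt (W x y) - Real.sqrt (W x' y)),
      Real.sqrt_nonneg (W x y), Real.sqrt_nonneg (W x' y)]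
  calc bhat W x x' ≤ ∑ y, (W x y + W x' y) / 2 := this
    _ = 1 := by rw [← Finset.sum_div, Finset.sum_add_distrib, hW.2 x, hW.2 x']; norm_num

end helpers

section top
variable {Y : Type*} [Fintype Y]

lemma Zv_le_Zmax' (r : ℕ) (W : ZMod (2 ^ r) → Y → ℝ) (d : ZMod (2 ^ r))
    (hd : d ≠ 0 ∧ owt r d = r) : Zv W d ≤ Zmax r W r := by
  have : Nonempty {v : ZMod (2 ^ r) // v ≠ 0 ∧ owt r v = r} := ⟨⟨d, hd⟩⟩
  exact le_ciSup (f := fun v : {v : ZMod (2 ^ r) // v ≠ 0 ∧ owt r v = r} => Zv W v.1)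
    (Set.Finite.bddAbove (Set.finite_range _)) ⟨d, hd⟩

lemma odd_mem (r : ℕ) (hr : 1 ≤ r) (d : ZMod (2 ^ r)) (hd : d.val % 2 = 1) :
    d ≠ 0 ∧ owt r d = r := by
  constructor
  · intro h; rw [h] at hd; simp [ZMod.val_zero] at hd
  · unfold owt
    have : padicValNat 2 d.val = 0 := by
      apply padicValNat.eq_zero_of_not_dvd
      omega
    omega

lemma val_add_parity (r : ℕ) (hr : 1 ≤ r) (a b : ZMod (2 ^ r)) :
    (a + b).val % 2 = (a.val + b.val) % 2 := by
  have h2 : (2 : ℕ) ∣ 2 ^ r := dvd_pow_self 2 (by omega)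
  rw [ZMod.val_add]
  exact Nat.mod_mod_of_dvd _ h2

end top

lemma bhat_minus_le {q : ℕ} [NeZero q] {Y : Type*} [Fintype Y]
    (W : ZMod q → Y → ℝ) (hW : IsDMC W) (a b : ZMod q) :
    bhat (Wminus W) a b ≤ (1 / (q : ℝ)) * ∑ u, ∑ u', bhat W (a + u) (b + u') * bhat W u u' := by
  have hq : (0:ℝ) < q := by
    have := Nat.pos_of_ne_zero (NeZero.ne q)
    exact_mod_cast this
  have hWn := hW.1
  have step1 : ∀ p : Y × Y, Real.sqrt (Wminus W a p * Wminus W b p)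
      ≤ (1 / (q:ℝ)) * ∑ u, ∑ u', Real.sqrt (W (a+u) p.1 * W (b+u') p.1)
          * Real.sqrt (W u p.2 * W u' p.2) := by
    intro p
    have hprod : Wminus W a p * Wminus W b p
        = (1/(q:ℝ))^2 * ∑ u, ∑ u', (W (a+u) p.1 * W (b+u') p.1) * (W u p.2 * W u' p.2) := by
      simp only [Wminus]
      rw [mul_mul_mul_comm, Finset.sum_mul_sum]
      congr 1
      · ring
      · exact Finset.sum_congr rfl fun u _ => Finset.sum_congr rfl fun u' _ => by ring
    rw [hprod, Real.sqrt_mul (by positivity), Real.sqrt_sq (by positivity)]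
    gcongr
    calc Real.sqrt (∑ u, ∑ u', (W (a+u) p.1 * W (b+u') p.1) * (W u p.2 * W u' p.2))
        ≤ ∑ u, Real.sqrt (∑ u', (W (a+u) p.1 * W (b+u') p.1) * (W u p.2 * W u' p.2)) :=
          sqrt_sum_le _ _ fun u _ => Finset.sum_nonneg fun u' _ =>
            mul_nonneg (mul_nonneg (hWn _ _) (hWn _ _)) (mul_nonneg (hWn _ _) (hWn _ _))
      _ ≤ ∑ u, ∑ u', Real.sqrt ((W (a+u) p.1 * W (b+u') p.1) * (W u p.2 * W u' p.2)) :=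
          Finset.sum_le_sum fun u _ => sqrt_sum_le _ _ fun u' _ =>
            mul_nonneg (mul_nonneg (hWn _ _) (hWn _ _)) (mul_nonneg (hWn _ _) (hWn _ _))
      _ = ∑ u, ∑ u', Real.sqrt (W (a+u) p.1 * W (b+u') p.1) * Real.sqrt (W u p.2 * W u' p.2) :=
          Finset.sum_congr rfl fun u _ => Finset.sum_congr rfl fun u' _ =>
            Real.sqrt_mul (mul_nonneg (hWn _ _) (hWn _ _)) _
  calc bhat (Wminus W) a b
      ≤ ∑ p : Y × Y, (1 / (q:ℝ)) * ∑ u, ∑ u', Real.sqrt (W (a+u) p.1 * W (b+u') p.1)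
          * Real.sqrt (W u p.2 * W u' p.2) := Finset.sum_le_sum fun p _ => step1 p
    _ = (1 / (q:ℝ)) * ∑ u, ∑ u', bhat W (a + u) (b + u') * bhat W u u' := by
        rw [← Finset.mul_sum]
        congr 1
        rw [Finset.sum_comm]
        refine Finset.sum_congr rfl fun u _ => ?_
        rw [Finset.sum_comm]
        refine Finset.sum_congr rfl fun u' _ => ?_
        rw [bhat, bhat, Finset.sum_mul_sum, Fintype.sum_prod_type]

lemma inner_bound (r : ℕ) (hr : 1 ≤ r) {Y : Type*} [Fintype Y]
    (W : ZMod (2 ^ r) → Y → ℝ) (hW : IsDMC W) (v e : ZMod (2 ^ r)) (hv : v.val % 2 = 1) :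
    ∑ u : ZMod (2 ^ r), ∑ x : ZMod (2 ^ r), bhat W x (x + (v + e)) * bhat W u (u + e)
      ≤ ((2 ^ r : ℕ) : ℝ) ^ 2 * Zmax r W r := by
  set Q : ℝ := ((2 ^ r : ℕ) : ℝ) with hQ
  have hQpos : (0:ℝ) < Q := by positivity
  have hZ : ∀ d : ZMod (2 ^ r), d.val % 2 = 1 → Zv W d ≤ Zmax r W r :=
    fun d hd => Zv_le_Zmax' r W d (odd_mem r hr d hd)
  have hsum : ∀ d : ZMod (2 ^ r), (∑ x, bhat W x (x + d)) = Q * Zv W d := by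
    intro d
    rw [Zv, ← mul_assoc, mul_one_div, div_self (ne_of_gt hQpos), one_mul]
  have hcard : (Finset.univ : Finset (ZMod (2 ^ r))).card = 2 ^ r := by
    rw [Finset.card_univ, ZMod.card]
  rcases Nat.mod_two_eq_zero_or_one e.val with he | he
  · -- e even, so v + e odd
    have hve : (v + e).val % 2 = 1 := by rw [val_add_parity r hr]; omega
    calc ∑ u : ZMod (2 ^ r), ∑ x : ZMod (2 ^ r), bhat W x (x + (v + e)) * bhat W u (u + e)
        ≤ ∑ u : ZMod (2 ^ r), ∑ x : ZMod (2 ^ r), bhat W x (x + (v + e)) * 1 :=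
          Finset.sum_le_sum fun u _ => Finset.sum_le_sum fun x _ =>
            mul_le_mul_of_nonneg_left (bhat_le_one W hW _ _) (bhat_nonneg W _ _)
      _ = ∑ u : ZMod (2 ^ r), Q * Zv W (v + e) := by
          refine Finset.sum_congr rfl fun u _ => ?_
          rw [← hsum]
          simp [mul_one]
      _ ≤ ∑ u : ZMod (2 ^ r), Q * Zmax r W r :=
          Finset.sum_le_sum fun u _ =>
            mul_le_mul_of_nonneg_left (hZ _ hve) (le_of_lt hQpos)
      _ = Q ^ 2 * Zmax r W r := by
          rw [Finset.sum_const, hcard, nsmul_eq_mul, ← hQ]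
          ring
  · -- e odd
    calc ∑ u : ZMod (2 ^ r), ∑ x : ZMod (2 ^ r), bhat W x (x + (v + e)) * bhat W u (u + e)
        ≤ ∑ u : ZMod (2 ^ r), ∑ x : ZMod (2 ^ r), 1 * bhat W u (u + e) :=
          Finset.sum_le_sum fun u _ => Finset.sum_le_sum fun x _ =>
            mul_le_mul_of_nonneg_right (bhat_le_one W hW _ _) (bhat_nonneg W _ _)
      _ = ∑ u : ZMod (2 ^ r), Q * bhat W u (u + e) := by
          refine Finset.sum_congr rfl fun u _ => ?_
          rw [Finset.sum_const, hcard, nsmul_eq_mul, ← hQ, one_mul]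
      _ = Q * (Q * Zv W e) := by rw [← Finset.mul_sum, hsum]
      _ ≤ Q * (Q * Zmax r W r) := by
          have h := mul_le_mul_of_nonneg_left (hZ e he) (le_of_lt hQpos)
          exact mul_le_mul_of_nonneg_left h (le_of_lt hQpos)
      _ = Q ^ 2 * Zmax r W r := by ring


/-- `Z_max^{(r)}(W⁻) ≤ q · Z_max^{(r)}(W)`. -/
theorem Zmax_minus_top (r : ℕ) (hr : 1 ≤ r) {Y : Type*} [Fintype Y] [Nonempty Y]
    (W : ZMod (2 ^ r) → Y → ℝ) (hW : IsDMC W) :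
    Zmax r (Wminus W) r ≤ (2 ^ r : ℝ) * Zmax r W r := by
  have hq1 : 1 < 2 ^ r := Nat.one_lt_two_pow (by omega)
  set Q : ℝ := ((2 ^ r : ℕ) : ℝ) with hQ
  have hQpos : (0:ℝ) < Q := by positivity
  have hQcast : Q = (2 : ℝ) ^ r := by rw [hQ]; push_cast; ring
  have h1odd : ((1 : ZMod (2 ^ r))).val % 2 = 1 := by
    have : ((1 : ZMod (2 ^ r))).val = 1 % 2 ^ r := ZMod.val_one_eq_one_mod _
    rw [this, Nat.mod_eq_of_lt hq1]
  have hne : Nonempty {v : ZMod (2 ^ r) // v ≠ 0 ∧ owt r v = r} :=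
    ⟨⟨1, odd_mem r hr 1 h1odd⟩⟩
  have hcard : (Finset.univ : Finset (ZMod (2 ^ r))).card = 2 ^ r := by
    rw [Finset.card_univ, ZMod.card]
  apply ciSup_le
  rintro ⟨v, hv0, hvw⟩
  have hvval : v.val % 2 = 1 := by
    have hval0 : v.val ≠ 0 := (ZMod.val_ne_zero v).mpr hv0
    have hpv : padicValNat 2 v.val = 0 := by
      unfold owt at hvw; omega
    rcases Nat.mod_two_eq_zero_or_one v.val with h | h
    · exfalso
      have h2 : 2 ∣ v.val := by omega
      have := one_le_padicValNat_of_dvd hval0 h2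
      omega
    · exact h
  have hper : ∀ u : ZMod (2 ^ r),
      (∑ a : ZMod (2 ^ r), ∑ u' : ZMod (2 ^ r), bhat W (a + u) (a + v + u') * bhat W u u')
      = ∑ e : ZMod (2 ^ r), ∑ x : ZMod (2 ^ r), bhat W x (x + (v + e)) * bhat W u (u + e) := by
    intro u
    rw [Finset.sum_comm]
    rw [← Equiv.sum_comp (Equiv.addLeft u)
      (fun u' => ∑ a : ZMod (2 ^ r), bhat W (a + u) (a + v + u') * bhat W u u')]
    refine Finset.sum_congr rfl fun e _ => ?_
    rw [← Equiv.sum_comp (Equiv.addRight u)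
      (fun x => bhat W x (x + (v + e)) * bhat W u (u + e))]
    refine Finset.sum_congr rfl fun a _ => ?_
    simp only [Equiv.coe_addLeft, Equiv.coe_addRight]
    have h1 : a + v + (u + e) = a + u + (v + e) := by ring
    rw [h1]
  have hswap :
      (∑ a : ZMod (2 ^ r), ∑ u : ZMod (2 ^ r), ∑ u' : ZMod (2 ^ r),
        bhat W (a + u) (a + v + u') * bhat W u u')
      = ∑ e : ZMod (2 ^ r), ∑ u : ZMod (2 ^ r), ∑ x : ZMod (2 ^ r),
        bhat W x (x + (v + e)) * bhat W u (u + e) := by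
    rw [Finset.sum_comm]
    rw [Finset.sum_congr rfl fun u _ => hper u]
    rw [Finset.sum_comm]
  calc Zv (Wminus W) v
      ≤ (1 / Q) * ∑ a : ZMod (2 ^ r),
          ((1 / Q) * ∑ u : ZMod (2 ^ r), ∑ u' : ZMod (2 ^ r),
            bhat W (a + u) (a + v + u') * bhat W u u') := by
        rw [Zv]
        apply mul_le_mul_of_nonneg_left _ (by positivity)
        exact Finset.sum_le_sum fun a _ => bhat_minus_le W hW a (a + v)
    _ = (1 / Q) * ((1 / Q) * ∑ e : ZMod (2 ^ r), ∑ u : ZMod (2 ^ r), ∑ x : ZMod (2 ^ r),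
          bhat W x (x + (v + e)) * bhat W u (u + e)) := by
        rw [← Finset.mul_sum, hswap]
    _ ≤ (1 / Q) * ((1 / Q) * ∑ e : ZMod (2 ^ r), Q ^ 2 * Zmax r W r) := by
        apply mul_le_mul_of_nonneg_left _ (by positivity)
        apply mul_le_mul_of_nonneg_left _ (by positivity)
        exact Finset.sum_le_sum fun e _ => inner_bound r hr W hW v e hvval
    _ = (2 ^ r : ℝ) * Zmax r W r := by
        rw [Finset.sum_const, hcard, nsmul_eq_mul, ← hQ, ← hQcast]
        field_simp
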